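/- arXiv:1401.3781 — 3 statements merged into one kernel-verified Lean document; each statement's English description precedes it below -/
import Mathlib

section
/- Let 0 < v < 1, μ ∈ ℝ and s ∈ ℝ. Then the equation (1 − Φ(x)) / (Φ_{μ,v}(s) − Φ_{μ,v}(x)) = N(x) / N_{μ,v}(x) has a unique real solution β_{μ,v,s}, and this solution satisfies β_{μ,v,s} < min{s, μ/(1−v)}. -/
open MeasureTheory Filter Set Real

/-- Density of the normal distribution with mean `μ` and variance `v`. -/
noncomputable def nPDF (μ v x : ℝ) : ℝ :=
  (Real.sqrt (2 * Real.pi * v))⁻¹ * Real.exp (-(x - μ) ^ 2 / (2 * v))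

/-- Cumulative distribution function of the normal distribution with mean `μ`
and variance `v`. -/
noncomputable def nCDF (μ v x : ℝ) : ℝ := ∫ t in Set.Iic x, nPDF μ v t

variable {μ v x s : ℝ}

lemma nPDF_pos (hv : 0 < v) (μ x : ℝ) : 0 < nPDF μ v x := by
  apply mul_pos (inv_pos.2 (Real.sqrt_pos.2 (by positivity))) (Real.exp_pos _)

lemma continuous_nPDF (μ v : ℝ) : Continuous (nPDF μ v) := by
  unfold nPDF
  fun_prop

lemma nPDF_eq (μ v : ℝ) : nPDF μ v = fun x => (Real.sqrt (2 * Real.pi * v))⁻¹ *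
    Real.exp (-(1/(2*v)) * (x - μ) ^ 2) := by
  funext x; unfold nPDF; ring_nf

lemma integrable_nPDF (hv : 0 < v) (μ : ℝ) : Integrable (nPDF μ v) := by
  rw [nPDF_eq]
  exact (((integrable_exp_neg_mul_sq (by positivity : (0:ℝ) < 1/(2*v))).comp_sub_right μ)).const_mul _

lemma integral_nPDF (hv : 0 < v) (μ : ℝ) : ∫ x, nPDF μ v x = 1 := by
  rw [nPDF_eq]
  rw [MeasureTheory.integral_const_mul]
  rw [integral_sub_right_eq_self (μ := volume) (fun x => Real.exp (-(1/(2*v)) * x ^ 2)) μ,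
    integral_gaussian]
  have h2 : Real.pi / (1/(2*v)) = 2 * Real.pi * v := by field_simp
  rw [h2]
  exact inv_mul_cancel₀ (ne_of_gt (Real.sqrt_pos.2 (by positivity)))

lemma nCDF_eq (hv : 0 < v) (μ y : ℝ) :
    nCDF μ v y = nCDF μ v 0 + ∫ t in (0:ℝ)..y, nPDF μ v t := by
  have := intervalIntegral.integral_Iic_sub_Iic (f := nPDF μ v) (μ := volume)
    (a := (0:ℝ)) (b := y) ((integrable_nPDF hv μ).integrableOn)
    ((integrable_nPDF hv μ).integrableOn)
  unfold nCDF
  linarith [this]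

lemma hasDerivAt_nCDF (hv : 0 < v) (μ x : ℝ) : HasDerivAt (nCDF μ v) (nPDF μ v x) x := by
  have : HasDerivAt (fun y => nCDF μ v 0 + ∫ t in (0:ℝ)..y, nPDF μ v t) (nPDF μ v x) x := by
    apply HasDerivAt.const_add
    exact intervalIntegral.integral_hasDerivAt_right
      ((integrable_nPDF hv μ).intervalIntegrable)
      ((continuous_nPDF μ v).stronglyMeasurableAtFilter _ _)
      (continuous_nPDF μ v).continuousAt
  exact this.congr_deriv rfl |>.congr_of_eventuallyEq (by
    filter_upwards with y; rw [nCDF_eq hv])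

lemma strictMono_nCDF (hv : 0 < v) (μ : ℝ) : StrictMono (nCDF μ v) := by
  have : ∀ x, 0 < deriv (nCDF μ v) x := fun x => by
    rw [(hasDerivAt_nCDF hv μ x).deriv]; exact nPDF_pos hv μ x
  exact strictMono_of_deriv_pos this

lemma nCDF_nonneg (hv : 0 < v) (μ x : ℝ) : 0 ≤ nCDF μ v x :=
  MeasureTheory.setIntegral_nonneg measurableSet_Iic (fun t _ => (nPDF_pos hv μ t).le)

lemma nCDF_add_Ioi (hv : 0 < v) (μ x : ℝ) :
    nCDF μ v x + ∫ t in Set.Ioi x, nPDF μ v t = 1 := by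
  have := MeasureTheory.integral_add_compl (measurableSet_Iic (a := x)) (integrable_nPDF hv μ)
  rw [compl_Iic] at this
  rw [← integral_nPDF hv μ]
  exact this

lemma nCDF_lt_one (hv : 0 < v) (μ x : ℝ) : nCDF μ v x < 1 := by
  have h := nCDF_add_Ioi hv μ x
  have hpos : 0 < ∫ t in Set.Ioi x, nPDF μ v t := by
    rw [MeasureTheory.setIntegral_pos_iff_support_of_nonneg_ae]
    · have : Function.support (nPDF μ v) = Set.univ := by
        ext t; simp [Function.mem_support, (nPDF_pos hv μ t).ne']
      rw [this, Set.univ_inter]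
      simp [Real.volume_Ioi]
    · filter_upwards with t using (nPDF_pos hv μ t).le
    · exact (integrable_nPDF hv μ).integrableOn
  linarith

lemma nCDF_le_one (hv : 0 < v) (μ x : ℝ) : nCDF μ v x ≤ 1 := (nCDF_lt_one hv μ x).le

lemma tendsto_nCDF_atTop (hv : 0 < v) (μ : ℝ) :
    Tendsto (nCDF μ v) atTop (nhds 1) := by
  have h := MeasureTheory.tendsto_setIntegral_of_monotone (ι := ℝ)
    (s := fun x => Set.Iic x) (f := nPDF μ v) (μ := volume)
    (fun i => measurableSet_Iic) (fun a b hab => Set.Iic_subset_Iic.2 hab)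
    (by rw [Set.iUnion_Iic]; exact (integrable_nPDF hv μ).integrableOn)
  rw [Set.iUnion_Iic] at h
  rw [MeasureTheory.setIntegral_univ, integral_nPDF hv μ] at h
  exact h

lemma tendsto_exp_quadratic_atTop {a : ℝ} (b c : ℝ) (ha : a < 0) :
    Tendsto (fun x => Real.exp (a*x^2 + b*x + c)) atTop (nhds 0) := by
  apply Real.tendsto_exp_atBot.comp
  have h1 : Tendsto (fun x : ℝ => a * x + b) atTop atBot :=
    tendsto_atBot_add_const_right _ b (Filter.Tendsto.const_mul_atTop_of_neg ha tendsto_id)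
  have h2 : Tendsto (fun x : ℝ => x * (a * x + b) + c) atTop atBot :=
    tendsto_atBot_add_const_right _ c (Filter.Tendsto.atTop_mul_atBot₀ tendsto_id h1)
  exact h2.congr (fun x => by ring)

lemma tendsto_exp_quadratic_atBot {a : ℝ} (b c : ℝ) (ha : a < 0) :
    Tendsto (fun x => Real.exp (a*x^2 + b*x + c)) atBot (nhds 0) := by
  have h := (tendsto_exp_quadratic_atTop (-b) c ha).comp tendsto_neg_atBot_atTop
  exact h.congr (fun x => by simp only [Function.comp_apply]; ring_nf)

/-- If `f` has negative derivative on `Ici a` and tends to `0` at `atTop`, then `f a > 0`. -/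
lemma pos_of_deriv_neg_tendsto {f f' : ℝ → ℝ} {a : ℝ}
    (hder : ∀ x ∈ Set.Ici a, HasDerivAt f (f' x) x)
    (hneg : ∀ x ∈ Set.Ioi a, f' x < 0)
    (hlim : Tendsto f atTop (nhds 0)) : 0 < f a := by
  have hanti : StrictAntiOn f (Set.Ici a) := by
    apply strictAntiOn_of_deriv_neg (convex_Ici a)
    · exact fun x hx => (hder x hx).continuousAt.continuousWithinAt
    · intro x hx
      rw [interior_Ici] at hx
      rw [(hder x (Set.mem_Ici.2 (le_of_lt hx))).deriv]
      exact hneg x hx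
  have h1 : f a > f (a+1) := hanti (le_refl a) (by simp only [Set.mem_Ici]; linarith) (by linarith)
  have h2 : 0 ≤ f (a+1) := by
    apply le_of_tendsto hlim
    filter_upwards [eventually_ge_atTop (a+2)] with x hx
    exact (hanti (by simp only [Set.mem_Ici]; linarith) (by simp only [Set.mem_Ici]; linarith)
      (by linarith)).le
  linarith

lemma hasDerivAt_nPDF (hv : 0 < v) (μ x : ℝ) :
    HasDerivAt (nPDF μ v) (-((x - μ)/v) * nPDF μ v x) x := by
  have h1 : HasDerivAt (fun x : ℝ => -(x - μ) ^ 2 / (2 * v)) (-((x-μ)/v)) x := by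
    have h0 := (((hasDerivAt_id x).sub_const μ).pow 2).neg.div_const (2*v)
    refine h0.congr_deriv ?_
    norm_num
    have hvne : v ≠ 0 := ne_of_gt hv
    field_simp
  have h2 := (h1.exp).const_mul (Real.sqrt (2 * Real.pi * v))⁻¹
  refine h2.congr_deriv ?_
  unfold nPDF; ring

section Key
variable (hv0 : 0 < v) (hv1 : v < 1)

/-- Auxiliary function `h x = e^{x²/2} Ψ(x)` where
`Ψ = (1 − Φ)·P − (1 − C)·N`. -/
noncomputable def keyH (μ v x : ℝ) : ℝ :=
  Real.exp (x^2/2) * ((1 - nCDF 0 1 x) * nPDF μ v x - (1 - nCDF μ v x) * nPDF 0 1 x)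

lemma hasDerivAt_keyH (hv0 : 0 < v) (μ : ℝ) (x : ℝ) :
    HasDerivAt (keyH μ v)
      (Real.exp (x^2/2) * (1 - nCDF 0 1 x) * nPDF μ v x * ((μ - (1-v)*x)/v)) x := by
  have he : HasDerivAt (fun x : ℝ => Real.exp (x^2/2)) (x * Real.exp (x^2/2)) x := by
    have h0 : HasDerivAt (fun x : ℝ => x^2/2) x x := by
      have := ((hasDerivAt_id x).pow 2).div_const 2
      refine this.congr_deriv ?_
      norm_num
    have := h0.exp
    refine this.congr_deriv ?_; ring
  have hΦ : HasDerivAt (fun x => 1 - nCDF 0 1 x) (-(nPDF 0 1 x)) x :=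
    (hasDerivAt_nCDF one_pos 0 x).const_sub 1
  have hC : HasDerivAt (fun x => 1 - nCDF μ v x) (-(nPDF μ v x)) x :=
    (hasDerivAt_nCDF hv0 μ x).const_sub 1
  have hP := hasDerivAt_nPDF hv0 μ x
  have hN : HasDerivAt (nPDF 0 1) (-x * nPDF 0 1 x) x := by
    have := hasDerivAt_nPDF one_pos 0 x
    convert this using 2 <;> ring
  have hΨ : HasDerivAt
      (fun x => (1 - nCDF 0 1 x) * nPDF μ v x - (1 - nCDF μ v x) * nPDF 0 1 x)
      ((-(nPDF 0 1 x)) * nPDF μ v x + (1 - nCDF 0 1 x) * (-((x - μ)/v) * nPDF μ v x)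
        - ((-(nPDF μ v x)) * nPDF 0 1 x + (1 - nCDF μ v x) * (-x * nPDF 0 1 x))) x :=
    (hΦ.mul hP).sub (hC.mul hN)
  have h := he.mul hΨ
  have hvne : v ≠ 0 := ne_of_gt hv0
  refine h.congr_deriv ?_
  field_simp
  ring

lemma tendsto_keyH_atTop (hv0 : 0 < v) (hv1 : v < 1) (μ : ℝ) :
    Tendsto (keyH μ v) atTop (nhds 0) := by
  have hterm2 : Tendsto (fun x => Real.exp (x^2/2) * ((1 - nCDF μ v x) * nPDF 0 1 x))
      atTop (nhds 0) := by
    have heq : ∀ x : ℝ, Real.exp (x^2/2) * ((1 - nCDF μ v x) * nPDF 0 1 x)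
        = (1 - nCDF μ v x) * (Real.sqrt (2 * Real.pi * 1))⁻¹ := by
      intro x
      unfold nPDF
      rw [show -(x-0)^2/(2*1) = -(x^2/2) by ring, Real.exp_neg]
      field_simp
    simp_rw [heq]
    have : Tendsto (fun x => 1 - nCDF μ v x) atTop (nhds 0) := by
      have := (tendsto_nCDF_atTop hv0 μ).const_sub 1
      simpa using this
    simpa using this.mul_const _
  have hEP : Tendsto (fun x => Real.exp (x^2/2) * nPDF μ v x) atTop (nhds 0) := by
    have heq : ∀ x : ℝ, Real.exp (x^2/2) * nPDF μ v x
        = (Real.sqrt (2 * Real.pi * v))⁻¹ *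
          Real.exp ((1/2 - 1/(2*v))*x^2 + (μ/v)*x + (-(μ^2)/(2*v))) := by
      intro x
      unfold nPDF
      rw [show Real.exp (x^2/2) * ((Real.sqrt (2*Real.pi*v))⁻¹ * Real.exp (-(x-μ)^2/(2*v)))
        = (Real.sqrt (2*Real.pi*v))⁻¹ * (Real.exp (x^2/2) * Real.exp (-(x-μ)^2/(2*v))) from by
          ring, ← Real.exp_add]
      congr 2
      have hvne : v ≠ 0 := ne_of_gt hv0
      field_simp
      ring
    simp_rw [heq]
    have ha : (1/2 - 1/(2*v) : ℝ) < 0 := by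
      rw [sub_neg]
      rw [div_lt_div_iff₀ (by norm_num) (by positivity)]
      linarith
    simpa using (tendsto_exp_quadratic_atTop (μ/v) (-(μ^2)/(2*v)) ha).const_mul _
  have hterm1 : Tendsto (fun x => (1 - nCDF 0 1 x) * (Real.exp (x^2/2) * nPDF μ v x))
      atTop (nhds 0) := by
    apply squeeze_zero (fun x => ?_) (fun x => ?_) hEP
    · have h1 : 0 ≤ 1 - nCDF 0 1 x := by linarith [nCDF_le_one one_pos 0 x]
      exact mul_nonneg h1 (mul_nonneg (Real.exp_pos _).le (nPDF_pos hv0 μ x).le)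
    · have h1 : 1 - nCDF 0 1 x ≤ 1 := by linarith [nCDF_nonneg one_pos 0 x]
      have h2 : 0 ≤ Real.exp (x^2/2) * nPDF μ v x :=
        mul_nonneg (Real.exp_pos _).le (nPDF_pos hv0 μ x).le
      nlinarith [nPDF_pos hv0 μ x, Real.exp_pos (x^2/2)]
  have : Tendsto (fun x => (1 - nCDF 0 1 x) * (Real.exp (x^2/2) * nPDF μ v x)
      - Real.exp (x^2/2) * ((1 - nCDF μ v x) * nPDF 0 1 x)) atTop (nhds 0) := by
    simpa using hterm1.sub hterm2
  exact this.congr (fun x => by unfold keyH; ring)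

lemma key_pos (hv0 : 0 < v) (hv1 : v < 1) (μ : ℝ) {x : ℝ} (hx : μ ≤ (1-v)*x) :
    0 < (1 - nCDF 0 1 x) * nPDF μ v x - (1 - nCDF μ v x) * nPDF 0 1 x := by
  have hΦlt := nCDF_lt_one one_pos 0
  have hh : 0 < keyH μ v x := by
    apply pos_of_deriv_neg_tendsto (f' := fun x =>
        Real.exp (x^2/2) * (1 - nCDF 0 1 x) * nPDF μ v x * ((μ - (1-v)*x)/v))
      (fun y _ => hasDerivAt_keyH hv0 μ y) ?_ (tendsto_keyH_atTop hv0 hv1 μ)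
    intro y hy
    rw [Set.mem_Ioi] at hy
    have h1 : μ - (1-v)*y < 0 := by nlinarith
    have h2 : 0 < Real.exp (y^2/2) * (1 - nCDF 0 1 y) * nPDF μ v y :=
      mul_pos (mul_pos (Real.exp_pos _) (by linarith [hΦlt y])) (nPDF_pos hv0 μ y)
    exact mul_neg_of_pos_of_neg h2 (div_neg_of_neg_of_pos h1 hv0)
  unfold keyH at hh
  have := Real.exp_pos (x^2/2)
  nlinarith

end Key

lemma slope_pos_right {f f' : ℝ → ℝ} {a : ℝ} (hder : HasDerivAt f (f' a) a)
    (ha : f a = 0) (hpos : 0 < f' a) : ∀ᶠ x in nhdsWithin a (Set.Ioi a), 0 < f x := by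
  have h := (hder.hasDerivWithinAt (s := Set.Ioi a))
  rw [hasDerivWithinAt_iff_tendsto_slope] at h
  have hset : Set.Ioi a \ {a} = Set.Ioi a := by
    apply Set.diff_singleton_eq_self; simp
  rw [hset] at h
  filter_upwards [h.eventually (eventually_gt_nhds hpos), self_mem_nhdsWithin] with x hx hx'
  rw [Set.mem_Ioi] at hx'
  have hs : slope f a x = f x / (x - a) := by
    rw [slope_def_field, ha, sub_zero]
  rw [hs] at hx
  have := mul_pos hx (sub_pos.2 hx')
  rwa [div_mul_cancel₀] at this
  exact ne_of_gt (sub_pos.2 hx')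

lemma slope_neg_left {f f' : ℝ → ℝ} {b : ℝ} (hder : HasDerivAt f (f' b) b)
    (hb : f b = 0) {p : ℝ} (hpb : p < b) (hfx : ∀ x ∈ Set.Ico p b, 0 < f x) :
    f' b ≤ 0 := by
  have h := (hder.hasDerivWithinAt (s := Set.Iio b))
  rw [hasDerivWithinAt_iff_tendsto_slope] at h
  have hset : Set.Iio b \ {b} = Set.Iio b := by
    apply Set.diff_singleton_eq_self; simp
  rw [hset] at h
  apply le_of_tendsto h
  filter_upwards [Ioo_mem_nhdsLT_of_mem (Set.mem_Ioc.2 ⟨hpb, le_refl b⟩)] with x hx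
  have hs : slope f b x = f x / (x - b) := by
    rw [slope_def_field, hb, sub_zero]
  rw [hs]
  apply le_of_lt
  apply div_neg_of_pos_of_neg
  · exact hfx x ⟨hx.1.le, hx.2⟩
  · linarith [hx.2]

lemma zeros_unique {f f' : ℝ → ℝ} (hder : ∀ x, HasDerivAt f (f' x) x)
    (hpos : ∀ x, f x = 0 → 0 < f' x) {a b : ℝ} (ha : f a = 0) (hb : f b = 0) : a = b := by
  have hcont : Continuous f := by
    have : Differentiable ℝ f := fun x => (hder x).differentiableAt
    exact this.continuous
  -- main step: no two distinct zeros
  have key : ∀ a b : ℝ, a < b → f a = 0 → f b = 0 → False := by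
    intro a b hab ha hb
    -- find p ∈ Ioo a b with f p > 0
    obtain ⟨p, hp_pos, hp_mem⟩ :=
      ((slope_pos_right (hder a) ha (hpos a ha)).and
        (Ioo_mem_nhdsGT_of_mem (Set.mem_Ico.2 ⟨le_refl a, hab⟩))).exists
    set S : Set ℝ := {x | x ∈ Set.Icc p b ∧ f x = 0} with hS
    have hSclosed : IsClosed S := (isClosed_Icc.inter (isClosed_eq hcont continuous_const))
    have hSne : S.Nonempty := ⟨b, ⟨hp_mem.2.le, le_refl b⟩, hb⟩
    have hSbdd : BddBelow S := ⟨p, fun x hx => hx.1.1⟩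
    set w := sInf S with hw
    have hwS : w ∈ S := hSclosed.csInf_mem hSne hSbdd
    have hpw : p < w := by
      rcases lt_or_eq_of_le hwS.1.1 with h | h
      · exact h
      · exact absurd hwS.2 (by rw [← h]; exact ne_of_gt hp_pos)
    have hfpos : ∀ x ∈ Set.Ico p w, 0 < f x := by
      intro x hx
      have hxb : x ≤ b := le_trans hx.2.le hwS.1.2
      have hxne : f x ≠ 0 := by
        intro h0
        have : w ≤ x := csInf_le hSbdd ⟨⟨hx.1, hxb⟩, h0⟩
        linarith [hx.2]
      rcases lt_trichotomy (f x) 0 with hneg | h0 | hposx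
      · exfalso
        have hsub : Set.Icc (f x) (f p) ⊆ f '' Set.Icc p x :=
          intermediate_value_Icc' hx.1 hcont.continuousOn
        obtain ⟨z, hz_mem, hz0⟩ := hsub ⟨hneg.le, hp_pos.le⟩
        have hzS : z ∈ S := ⟨⟨hz_mem.1, le_trans hz_mem.2 hxb⟩, hz0⟩
        have : w ≤ z := csInf_le hSbdd hzS
        linarith [hz_mem.2, hx.2]
      · exact absurd h0 hxne
      · exact hposx
    have hle := slope_neg_left (hder w) hwS.2 hpw hfpos
    linarith [hpos w hwS.2]
  rcases lt_trichotomy a b with h | h | h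
  · exact absurd (key a b h ha hb) (by simp)
  · exact h
  · exact absurd (key b a h hb ha) (by simp)

noncomputable def dfun (μ v s x : ℝ) : ℝ :=
  (1 - nCDF 0 1 x) / nPDF 0 1 x - (nCDF μ v s - nCDF μ v x) / nPDF μ v x

lemma hasDerivAt_dfun (hv0 : 0 < v) (μ s x : ℝ) :
    HasDerivAt (dfun μ v s)
      (x * ((1 - nCDF 0 1 x) / nPDF 0 1 x)
        - ((x - μ)/v) * ((nCDF μ v s - nCDF μ v x) / nPDF μ v x)) x := by
  have hN : HasDerivAt (nPDF 0 1) (-x * nPDF 0 1 x) x := by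
    have := hasDerivAt_nPDF one_pos 0 x
    convert this using 2 <;> ring
  have hP := hasDerivAt_nPDF hv0 μ x
  have hΦ : HasDerivAt (fun x => 1 - nCDF 0 1 x) (-(nPDF 0 1 x)) x :=
    (hasDerivAt_nCDF one_pos 0 x).const_sub 1
  have hD : HasDerivAt (fun x => nCDF μ v s - nCDF μ v x) (-(nPDF μ v x)) x :=
    (hasDerivAt_nCDF hv0 μ x).const_sub _
  have hNne : nPDF 0 1 x ≠ 0 := ne_of_gt (nPDF_pos one_pos 0 x)
  have hPne : nPDF μ v x ≠ 0 := ne_of_gt (nPDF_pos hv0 μ x)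
  have h1 := hΦ.div hN hNne
  have h2 := hD.div hP hPne
  have h := h1.sub h2
  refine h.congr_deriv ?_
  have hvne : v ≠ 0 := ne_of_gt hv0
  field_simp
  ring

lemma dfun_zero_lt (hv0 : 0 < v) (hv1 : v < 1) (μ s : ℝ) {z : ℝ}
    (hz : dfun μ v s z = 0) : z < s ∧ (1-v)*z < μ := by
  have hN := nPDF_pos one_pos 0 z
  have hP := nPDF_pos hv0 μ z
  have hΦ := nCDF_lt_one one_pos 0 z
  have hm1 : 0 < (1 - nCDF 0 1 z) / nPDF 0 1 z := div_pos (by linarith) hN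
  have hm2 : 0 < (nCDF μ v s - nCDF μ v z) / nPDF μ v z := by
    unfold dfun at hz; linarith
  have hD : 0 < nCDF μ v s - nCDF μ v z := by
    by_contra h
    push_neg at h
    have : (nCDF μ v s - nCDF μ v z) / nPDF μ v z ≤ 0 := div_nonpos_of_nonpos_of_nonneg h hP.le
    linarith
  constructor
  · exact (strictMono_nCDF hv0 μ).lt_iff_lt.1 (by linarith)
  · by_contra h
    push_neg at h
    have hkey := key_pos hv0 hv1 μ h
    -- dfun = 0 gives (1-Φ)*P = D*N ≤ (1-C)*N
    have heq : (1 - nCDF 0 1 z) * nPDF μ v z = (nCDF μ v s - nCDF μ v z) * nPDF 0 1 z := by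
      have := sub_eq_zero.1 hz
      field_simp at this
      linarith [this]
    have hle : (nCDF μ v s - nCDF μ v z) * nPDF 0 1 z ≤ (1 - nCDF μ v z) * nPDF 0 1 z := by
      apply mul_le_mul_of_nonneg_right _ hN.le
      linarith [nCDF_le_one hv0 μ s]
    linarith

lemma dfun_pos_of_ge (hv0 : 0 < v) (hv1 : v < 1) (μ s : ℝ) {x : ℝ}
    (hx : μ ≤ (1-v)*x ∨ s ≤ x) : 0 < dfun μ v s x := by
  have hN := nPDF_pos one_pos 0 x
  have hP := nPDF_pos hv0 μ x
  have hΦ := nCDF_lt_one one_pos 0 x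
  have hm1 : 0 < (1 - nCDF 0 1 x) / nPDF 0 1 x := div_pos (by linarith) hN
  rcases hx with hx | hx
  · have hkey := key_pos hv0 hv1 μ hx
    have hle : (nCDF μ v s - nCDF μ v x) * nPDF 0 1 x ≤ (1 - nCDF μ v x) * nPDF 0 1 x := by
      apply mul_le_mul_of_nonneg_right _ hN.le
      linarith [nCDF_le_one hv0 μ s]
    have h2 : (nCDF μ v s - nCDF μ v x) * nPDF 0 1 x < (1 - nCDF 0 1 x) * nPDF μ v x := by
      linarith
    unfold dfun
    rw [sub_pos, div_lt_div_iff₀ hP hN]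
    linarith
  · have hD : nCDF μ v s - nCDF μ v x ≤ 0 := by
      have := (strictMono_nCDF hv0 μ).monotone hx
      linarith
    have : (nCDF μ v s - nCDF μ v x) / nPDF μ v x ≤ 0 := div_nonpos_of_nonpos_of_nonneg hD hP.le
    unfold dfun
    linarith

lemma eq_iff_dfun (hv0 : 0 < v) (μ s x : ℝ) :
    ((1 - nCDF 0 1 x) / (nCDF μ v s - nCDF μ v x) = nPDF 0 1 x / nPDF μ v x)
      ↔ dfun μ v s x = 0 := by
  have hN := nPDF_pos one_pos 0 x
  have hP := nPDF_pos hv0 μ x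
  have hΦ := nCDF_lt_one one_pos 0 x
  by_cases hD : nCDF μ v s - nCDF μ v x = 0
  · constructor
    · intro h
      rw [hD, div_zero] at h
      exact absurd h.symm (ne_of_gt (div_pos hN hP))
    · intro h
      exfalso
      unfold dfun at h
      rw [hD, zero_div, sub_zero] at h
      have : 0 < (1 - nCDF 0 1 x) / nPDF 0 1 x := div_pos (by linarith) hN
      linarith
  · rw [div_eq_div_iff hD (ne_of_gt hP)]
    unfold dfun
    rw [sub_eq_zero, div_eq_div_iff (ne_of_gt hN) (ne_of_gt hP)]
    constructor <;> intro h <;> linarith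

lemma exists_dfun_neg (hv0 : 0 < v) (hv1 : v < 1) (μ s x1 : ℝ) :
    ∃ x0 < x1, dfun μ v s x0 < 0 := by
  set ε := nCDF μ v s - nCDF μ v (s-1) with hε
  have hεpos : 0 < ε := sub_pos.2 ((strictMono_nCDF hv0 μ) (by linarith))
  have hratio : ∀ x : ℝ, nPDF μ v x / nPDF 0 1 x
      = (Real.sqrt (2*Real.pi*1) / Real.sqrt (2*Real.pi*v)) *
        Real.exp ((1/2 - 1/(2*v))*x^2 + (μ/v)*x + (-(μ^2)/(2*v))) := by
    intro x
    have h1 : Real.sqrt (2*Real.pi*1) ≠ 0 := ne_of_gt (Real.sqrt_pos.2 (by positivity))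
    have h2 : Real.sqrt (2*Real.pi*v) ≠ 0 := ne_of_gt (Real.sqrt_pos.2 (by positivity))
    have hvne : v ≠ 0 := ne_of_gt hv0
    unfold nPDF
    have h3 : (Real.sqrt (2*Real.pi*v))⁻¹ * Real.exp (-(x - μ)^2/(2*v))
        / ((Real.sqrt (2*Real.pi*1))⁻¹ * Real.exp (-(x - 0)^2/(2*1)))
        = (Real.sqrt (2*Real.pi*1) / Real.sqrt (2*Real.pi*v)) *
          (Real.exp (-(x - μ)^2/(2*v)) / Real.exp (-(x - 0)^2/(2*1))) := by
      field_simp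
    rw [h3, ← Real.exp_sub]
    congr 2
    field_simp
    ring
  have htend : Tendsto (fun x => nPDF μ v x / nPDF 0 1 x) atBot (nhds 0) := by
    have ha : (1/2 - 1/(2*v) : ℝ) < 0 := by
      rw [sub_neg, div_lt_div_iff₀ (by norm_num) (by positivity)]
      linarith
    have := (tendsto_exp_quadratic_atBot (μ/v) (-(μ^2)/(2*v)) ha).const_mul
      (Real.sqrt (2*Real.pi*1) / Real.sqrt (2*Real.pi*v))
    simp only [mul_zero] at this
    exact this.congr (fun x => (hratio x).symm)
  obtain ⟨x0, hx0⟩ := ((htend.eventually_lt_const hεpos).and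
    ((eventually_le_atBot (s-1)).and (eventually_lt_atBot x1))).exists
  obtain ⟨hr, hs1, hx1⟩ := hx0
  refine ⟨x0, hx1, ?_⟩
  have hN := nPDF_pos one_pos 0 x0
  have hP := nPDF_pos hv0 μ x0
  have hPN : nPDF μ v x0 < ε * nPDF 0 1 x0 := (div_lt_iff₀ hN).1 hr
  have hD : ε ≤ nCDF μ v s - nCDF μ v x0 := by
    have := (strictMono_nCDF hv0 μ).monotone hs1
    rw [hε]; linarith
  have hΦ0 := nCDF_nonneg one_pos 0 x0
  have hkey : (1 - nCDF 0 1 x0) * nPDF μ v x0 < (nCDF μ v s - nCDF μ v x0) * nPDF 0 1 x0 := by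
    have h4 : (1 - nCDF 0 1 x0) * nPDF μ v x0 ≤ nPDF μ v x0 := by
      nlinarith
    have h5 : ε * nPDF 0 1 x0 ≤ (nCDF μ v s - nCDF μ v x0) * nPDF 0 1 x0 := by
      nlinarith
    linarith
  unfold dfun
  rw [sub_neg, div_lt_div_iff₀ hN hP]
  linarith

lemma deriv_pos_at_zero (hv0 : 0 < v) (hv1 : v < 1) (μ s : ℝ) {z : ℝ}
    (hz : dfun μ v s z = 0) :
    0 < z * ((1 - nCDF 0 1 z) / nPDF 0 1 z)
      - ((z - μ)/v) * ((nCDF μ v s - nCDF μ v z) / nPDF μ v z) := by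
  obtain ⟨hzs, hzc⟩ := dfun_zero_lt hv0 hv1 μ s hz
  have hm2eq : (nCDF μ v s - nCDF μ v z) / nPDF μ v z
      = (1 - nCDF 0 1 z) / nPDF 0 1 z := by
    unfold dfun at hz; linarith
  rw [hm2eq]
  set m := (1 - nCDF 0 1 z) / nPDF 0 1 z with hm
  have hm1 : 0 < m :=
    div_pos (by linarith [nCDF_lt_one one_pos 0 z]) (nPDF_pos one_pos 0 z)
  have heq : z * m - ((z - μ)/v) * m = m * ((μ - (1-v)*z)/v) := by
    have hvne : v ≠ 0 := ne_of_gt hv0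
    field_simp
    ring
  rw [heq]
  exact mul_pos hm1 (div_pos (by linarith) hv0)

/-- Lemma 1: for `0 < v < 1`, the equation
`(1 − Φ(x)) / (Φ_{μ,v}(s) − Φ_{μ,v}(x)) = N(x) / N_{μ,v}(x)` has a unique real
solution `β`, and it satisfies `β < min {s, μ/(1−v)}`. -/
theorem unique_solution_lt_one (v μ s : ℝ) (hv0 : 0 < v) (hv1 : v < 1) :
    ∃ β : ℝ,
      (∀ x : ℝ,
        (1 - nCDF 0 1 x) / (nCDF μ v s - nCDF μ v x) = nPDF 0 1 x / nPDF μ v x ↔ x = β) ∧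
      β < min s (μ / (1 - v)) := by
  have hv1' : 0 < 1 - v := by linarith
  set x1 := min s (μ / (1 - v)) with hx1
  have hd1 : 0 < dfun μ v s x1 := by
    rcases le_total s (μ / (1 - v)) with h | h
    · rw [hx1, min_eq_left h]
      exact dfun_pos_of_ge hv0 hv1 μ s (Or.inr (le_refl s))
    · rw [hx1, min_eq_right h]
      apply dfun_pos_of_ge hv0 hv1 μ s (Or.inl _)
      rw [mul_div_cancel₀ _ (ne_of_gt hv1')]
  obtain ⟨x0, hx01, hd0⟩ := exists_dfun_neg hv0 hv1 μ s x1
  have hcont : ContinuousOn (dfun μ v s) (Set.Icc x0 x1) := fun x _ =>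
    (hasDerivAt_dfun hv0 μ s x).continuousAt.continuousWithinAt
  have hsub := intermediate_value_Icc hx01.le hcont
  obtain ⟨β, hβmem, hβ0⟩ := hsub ⟨hd0.le, hd1.le⟩
  obtain ⟨hβs, hβc⟩ := dfun_zero_lt hv0 hv1 μ s hβ0
  refine ⟨β, fun x => ?_, lt_min hβs ((lt_div_iff₀ hv1').2 (by linarith))⟩
  rw [eq_iff_dfun hv0 μ s x]
  constructor
  · intro hx
    exact zeros_unique (hasDerivAt_dfun hv0 μ s)
      (fun y hy => deriv_pos_at_zero hv0 hv1 μ s hy) hx hβ0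
  · intro hx
    rw [hx]
    exact hβ0
end

section
/- Let P and Q be probability distributions on finite sets and let N be a natural number. Then F^𝓜(P → Q | N) = F^𝓜(𝒞_{2^N}(P) → Q), i.e., the maximal fidelity of majorization conversion from P to Q via a storage of N bits equals the maximal fidelity of (unrestricted) majorization conversion from the distribution 𝒞_{2^N}(P) to Q. -/
open Filter MeasureTheory Topology

section Defs

variable {α β : Type*} [Fintype α] [Fintype β]

/-- `P` is a probability distribution on the finite type `α`. -/
def IsProbDist (P : α → ℝ) : Prop := (∀ x, 0 ≤ P x) ∧ ∑ x, P x = 1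

/-- Fidelity (Bhattacharyya coefficient) of two distributions on a finite set. -/
noncomputable def fid (P Q : α → ℝ) : ℝ := ∑ x, Real.sqrt (P x * Q x)

/-- Sum of the `l` largest values of `P` (for nonnegative `P`). -/
noncomputable def topSum (P : α → ℝ) (l : ℕ) : ℝ :=
  sSup {r : ℝ | ∃ S : Finset α, S.card ≤ l ∧ r = ∑ x ∈ S, P x}

/-- `P ≺ Q`: `P` is majorized by `Q` (the underlying finite sets may differ). -/
def MajorizedBy (P : α → ℝ) (Q : β → ℝ) : Prop := ∀ l : ℕ, topSum P l ≤ topSum Q l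

open Classical in
/-- Pushforward `W(P)` of the distribution `P` under a deterministic map `W`. -/
noncomputable def push (W : α → β) (P : α → ℝ) : β → ℝ :=
  fun y => ∑ x, if W x = y then P x else 0

/-- Maximal fidelity `F^𝓓(P → Q)` among deterministic conversions. -/
noncomputable def FD (P : α → ℝ) (Q : β → ℝ) : ℝ :=
  sSup {r : ℝ | ∃ W : α → β, r = fid (push W P) Q}

/-- Maximal fidelity `F^𝓓(P → Q | ·)` among deterministic conversions routed
through a storage set with `M` elements (a storage of `N` bits has `M = 2^N`). -/
noncomputable def FDstore (P : α → ℝ) (Q : β → ℝ) (M : ℕ) : ℝ :=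
  sSup {r : ℝ | ∃ W : α → Fin M, ∃ W' : Fin M → β, r = fid (push W' (push W P)) Q}

/-- Maximal fidelity `F^𝓜(P → Q)` among majorization conversions. -/
noncomputable def FM (P : α → ℝ) (Q : β → ℝ) : ℝ :=
  sSup {r : ℝ | ∃ P'' : β → ℝ, IsProbDist P'' ∧ MajorizedBy P P'' ∧ r = fid P'' Q}

/-- Maximal fidelity `F^𝓜(P → Q | ·)` among majorization conversions routed
through a storage set with `M` elements (a storage of `N` bits has `M = 2^N`). -/
noncomputable def FMstore (P : α → ℝ) (Q : β → ℝ) (M : ℕ) : ℝ :=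
  sSup {r : ℝ | ∃ P' : Fin M → ℝ, ∃ P'' : β → ℝ,
    IsProbDist P' ∧ IsProbDist P'' ∧ MajorizedBy P P' ∧ MajorizedBy P' P'' ∧
    r = fid P'' Q}

/-- The `n`-fold i.i.d. distribution `P^n`. -/
noncomputable def iid (P : α → ℝ) (n : ℕ) : (Fin n → α) → ℝ := fun f => ∏ i, P (f i)

/-- The uniform distribution `U_N` on an `N`-element set. -/
noncomputable def unif (N : ℕ) : Fin N → ℝ := fun _ => (N : ℝ)⁻¹

/-- Shannon entropy `H(P)` (base-2 logarithm). -/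
noncomputable def ent (P : α → ℝ) : ℝ := -∑ x, P x * Real.logb 2 (P x)

/-- The varentropy `V(P) = Σ_x P(x)(−log₂P(x) − H(P))²`. -/
noncomputable def varInfo (P : α → ℝ) : ℝ :=
  ∑ x, P x * (-Real.logb 2 (P x) - ent P) ^ 2

/-- `L^𝓓(P, Q | ν)`: maximal number of copies of `Q` obtainable from `P` by a
deterministic conversion with fidelity at least `ν`. -/
noncomputable def LD (P : α → ℝ) (Q : β → ℝ) (ν : ℝ) : ℕ :=
  sSup {L : ℕ | ν ≤ FD P (iid Q L)}

/-- `L^𝓜(P, Q | ν)`. -/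
noncomputable def LM (P : α → ℝ) (Q : β → ℝ) (ν : ℝ) : ℕ :=
  sSup {L : ℕ | ν ≤ FM P (iid Q L)}

/-- `L^𝓓(P, Q | ν, ·)` via a storage set with `M` elements. -/
noncomputable def LDstore (P : α → ℝ) (Q : β → ℝ) (ν : ℝ) (M : ℕ) : ℕ :=
  sSup {L : ℕ | ν ≤ FDstore P (iid Q L) M}

/-- `L^𝓜(P, Q | ν, ·)` via a storage set with `M` elements. -/
noncomputable def LMstore (P : α → ℝ) (Q : β → ℝ) (ν : ℝ) (M : ℕ) : ℕ :=
  sSup {L : ℕ | ν ≤ FMstore P (iid Q L) M}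

/-- The `j`-th largest value `P↓(j)` of `P` (1-indexed; `0` for `j > |α|`). -/
noncomputable def sortedVal (P : α → ℝ) (j : ℕ) : ℝ := topSum P j - topSum P (j - 1)

/-- The index `J_{P,M}`. -/
noncomputable def JPM (P : α → ℝ) (M : ℕ) : ℕ :=
  sSup ({0} ∪ {j : ℕ | 1 ≤ j ∧ j ≤ M - 1 ∧
    ((∑ x, P x) - topSum P j) / ((M : ℝ) - (j : ℝ)) < sortedVal P j})

open Classical in
/-- The distribution `𝒞_M(P)` on an `M`-element set. -/
noncomputable def CM (P : α → ℝ) (M : ℕ) : Fin M → ℝ := fun j =>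
  if (j : ℕ) + 1 ≤ JPM P M then sortedVal P ((j : ℕ) + 1)
  else ((∑ x, P x) - topSum P (JPM P M)) / ((M : ℝ) - (JPM P M : ℝ))

end Defs

section Helpers

set_option linter.unusedSectionVars false

variable {α : Type*} [Fintype α]

lemma topSum_set_finite (P : α → ℝ) (l : ℕ) :
    {r : ℝ | ∃ S : Finset α, S.card ≤ l ∧ r = ∑ x ∈ S, P x}.Finite := by
  have hsub : {r : ℝ | ∃ S : Finset α, S.card ≤ l ∧ r = ∑ x ∈ S, P x}
      ⊆ (fun S : Finset α => ∑ x ∈ S, P x) '' Set.univ := by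
    rintro r ⟨S, _, rfl⟩; exact ⟨S, trivial, rfl⟩
  exact (Set.finite_univ.image _).subset hsub

lemma topSum_mem (P : α → ℝ) (l : ℕ) :
    ∃ S : Finset α, S.card ≤ l ∧ topSum P l = ∑ x ∈ S, P x := by
  have hne : {r : ℝ | ∃ S : Finset α, S.card ≤ l ∧ r = ∑ x ∈ S, P x}.Nonempty :=
    ⟨0, ∅, by simp⟩
  exact hne.csSup_mem (topSum_set_finite P l)

lemma sum_le_topSum (P : α → ℝ) {l : ℕ} (S : Finset α) (h : S.card ≤ l) :
    ∑ x ∈ S, P x ≤ topSum P l :=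
  le_csSup (topSum_set_finite P l).bddAbove ⟨S, h, rfl⟩

lemma topSum_zero (P : α → ℝ) : topSum P 0 = 0 := by
  obtain ⟨S, hc, he⟩ := topSum_mem P 0
  rw [he, Finset.card_eq_zero.mp (Nat.le_zero.mp hc), Finset.sum_empty]

lemma topSum_mono (P : α → ℝ) {l l' : ℕ} (h : l ≤ l') : topSum P l ≤ topSum P l' := by
  obtain ⟨S, hc, he⟩ := topSum_mem P l
  rw [he]; exact sum_le_topSum P S (hc.trans h)

lemma topSum_le_sum (P : α → ℝ) (hP : ∀ x, 0 ≤ P x) (l : ℕ) :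
    topSum P l ≤ ∑ x, P x := by
  obtain ⟨S, _, he⟩ := topSum_mem P l
  rw [he]
  exact Finset.sum_le_sum_of_subset_of_nonneg (Finset.subset_univ S) fun i _ _ => hP i

lemma topSum_eq_sum (P : α → ℝ) (hP : ∀ x, 0 ≤ P x) {l : ℕ}
    (h : Fintype.card α ≤ l) : topSum P l = ∑ x, P x := by
  refine le_antisymm (topSum_le_sum P hP l) ?_
  exact sum_le_topSum P Finset.univ (by simpa using h)

lemma topSum_nonneg (P : α → ℝ) (l : ℕ) : 0 ≤ topSum P l :=
  le_trans (by simp) (sum_le_topSum P ∅ (Nat.zero_le l))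

lemma topSum_concave (P : α → ℝ) (l : ℕ) :
    topSum P (l + 2) + topSum P l ≤ 2 * topSum P (l + 1) := by
  classical
  obtain ⟨B, hBc, hBe⟩ := topSum_mem P (l + 2)
  obtain ⟨A, hAc, hAe⟩ := topSum_mem P l
  rcases le_or_gt B.card (l + 1) with h | h
  · have h1 : topSum P (l + 2) ≤ topSum P (l + 1) := by
      rw [hBe]; exact sum_le_topSum P B h
    have h2 : topSum P l ≤ topSum P (l + 1) := topSum_mono P (by omega)
    linarith
  · have hAB : A.card < B.card := lt_of_le_of_lt hAc (by omega)
    obtain ⟨b, hbB, hbA⟩ : ∃ b ∈ B, b ∉ A := by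
      by_contra hcon; push_neg at hcon
      exact absurd (Finset.card_le_card fun x hx => hcon x hx) (by omega)
    have h1 : ∑ x ∈ insert b A, P x ≤ topSum P (l + 1) :=
      sum_le_topSum P _ (by rw [Finset.card_insert_of_notMem hbA]; omega)
    have h2 : ∑ x ∈ B.erase b, P x ≤ topSum P (l + 1) :=
      sum_le_topSum P _ (by rw [Finset.card_erase_of_mem hbB]; omega)
    have e1 : ∑ x ∈ insert b A, P x = P b + ∑ x ∈ A, P x := Finset.sum_insert hbA
    have e2 : ∑ x ∈ B.erase b, P x = ∑ x ∈ B, P x - P b :=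
      Finset.sum_erase_eq_sub hbB
    linarith [hAe, hBe]

lemma sortedVal_succ (P : α → ℝ) (m : ℕ) :
    sortedVal P (m + 1) = topSum P (m + 1) - topSum P m := by
  simp [sortedVal]

lemma sortedVal_nonneg (P : α → ℝ) (j : ℕ) : 0 ≤ sortedVal P j :=
  sub_nonneg.mpr (topSum_mono P (Nat.sub_le j 1))

lemma sortedVal_step (P : α → ℝ) (m : ℕ) :
    sortedVal P (m + 2) ≤ sortedVal P (m + 1) := by
  have := topSum_concave P m
  rw [sortedVal_succ, sortedVal_succ]
  linarith

lemma sortedVal_antitone (P : α → ℝ) {i j : ℕ} (hi : 1 ≤ i) (hij : i ≤ j) :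
    sortedVal P j ≤ sortedVal P i := by
  induction j with
  | zero => omega
  | succ m ih =>
    rcases Nat.lt_or_ge i (m + 1) with h | h
    · have him : i ≤ m := by omega
      obtain ⟨k, rfl⟩ := Nat.exists_eq_add_of_le (le_trans hi him)
      have hs : sortedVal P (1 + k + 1) ≤ sortedVal P (1 + k) := by
        have e1 : 1 + k + 1 = k + 2 := by omega
        have e2 : 1 + k = k + 1 := by omega
        rw [e1, e2]; exact sortedVal_step P k
      exact le_trans hs (ih him)
    · have : i = m + 1 := by omega
      subst this; exact le_refl _

lemma sum_sortedVal (P : α → ℝ) (m : ℕ) :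
    ∑ j ∈ Finset.range m, sortedVal P (j + 1) = topSum P m := by
  induction m with
  | zero => simp [topSum_zero]
  | succ m ih => rw [Finset.sum_range_succ, ih, sortedVal_succ]; ring

/-- H2: `T m - T a ≥ (m - a) * P↓(m)`. -/
lemma topSum_diff_ge (P : α → ℝ) {a m : ℕ} (h : a ≤ m) :
    ((m : ℝ) - a) * sortedVal P m ≤ topSum P m - topSum P a := by
  obtain ⟨d, rfl⟩ := Nat.exists_eq_add_of_le h
  induction d with
  | zero => simp
  | succ d ih =>
    have ih' := ih (by omega)
    have heq : a + (d + 1) = a + d + 1 := by omega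
    rw [heq]
    have h1 := sortedVal_succ P (a + d)
    rcases Nat.eq_zero_or_pos (a + d) with h0 | h0
    · have ha : a = 0 := by omega
      have hd : d = 0 := by omega
      subst ha; subst hd
      simp only [Nat.zero_add] at h1 ⊢
      rw [h1]
      push_cast
      have := topSum_zero P
      linarith
    · have h2 : sortedVal P (a + d + 1) ≤ sortedVal P (a + d) := by
        obtain ⟨k, hk⟩ := Nat.exists_eq_add_of_le h0
        rw [hk] at *
        have : 1 + k + 1 = k + 2 := by omega
        rw [this] at *
        have : 1 + k = k + 1 := by omega
        rw [this] at *
        exact sortedVal_step P k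
      have h3 : ((d:ℝ)) * sortedVal P (a + d + 1) ≤ ((d:ℝ)) * sortedVal P (a + d) :=
        mul_le_mul_of_nonneg_left h2 (Nat.cast_nonneg d)
      push_cast at ih' ⊢
      linarith

/-- H3: `T b - T m ≤ (b - m) * P↓(m+1)`. -/
lemma topSum_diff_le (P : α → ℝ) {m b : ℕ} (h : m ≤ b) :
    topSum P b - topSum P m ≤ ((b : ℝ) - m) * sortedVal P (m + 1) := by
  obtain ⟨d, rfl⟩ := Nat.exists_eq_add_of_le h
  induction d with
  | zero => simp
  | succ d ih =>
    have heq : m + (d + 1) = (m + d) + 1 := by omega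
    rw [heq]
    have h1 := sortedVal_succ P (m + d)
    have h2 : sortedVal P (m + d + 1) ≤ sortedVal P (m + 1) :=
      sortedVal_antitone P (by omega) (by omega)
    have ih' := ih (by omega)
    push_cast
    push_cast at ih'
    linarith

end Helpers

section Helpers2

set_option linter.unusedSectionVars false

open Finset

/-- Rearrangement: a sum over any `S ⊆ Fin M` is at most the sum of the first
`S.card` values of an antitone vector. -/
lemma sum_le_range_of_antitone {M : ℕ} (Q : Fin M → ℝ)
    (hmono : ∀ i j : Fin M, i ≤ j → Q j ≤ Q i) (n : ℕ) :
    ∀ S : Finset (Fin M), S.card = n →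
      ∑ x ∈ S, Q x ≤ ∑ j ∈ Finset.range n, (if h : j < M then Q ⟨j, h⟩ else 0) := by
  induction n with
  | zero => intro S hS; simp [Finset.card_eq_zero.mp hS]
  | succ n ih =>
    intro S hS
    have hne : S.Nonempty := Finset.card_pos.mp (by omega)
    set x := S.max' hne with hxdef
    have hx : x ∈ S := S.max'_mem hne
    have hsub : S ⊆ Finset.Iic x := fun y hy => Finset.mem_Iic.mpr (S.le_max' y hy)
    have hcard : S.card ≤ (x : ℕ) + 1 := by
      have h1 := Finset.card_le_card hsub
      rwa [Fin.card_Iic] at h1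
    have hnM : n < M := by
      have := hcard
      have hxM : (x : ℕ) < M := x.isLt
      omega
    have hxge : ((⟨n, hnM⟩ : Fin M) : ℕ) ≤ (x : ℕ) := by simp; omega
    have hQx : Q x ≤ Q ⟨n, hnM⟩ := hmono _ _ (Fin.le_def.mpr hxge)
    have herase : (S.erase x).card = n := by rw [Finset.card_erase_of_mem hx]; omega
    have hih := ih (S.erase x) herase
    have hsplit : ∑ y ∈ S, Q y = ∑ y ∈ S.erase x, Q y + Q x := by
      rw [Finset.sum_erase_eq_sub hx]; ring
    rw [hsplit, Finset.sum_range_succ]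
    have : (if h : n < M then Q ⟨n, h⟩ else 0) = Q ⟨n, hnM⟩ := dif_pos hnM
    rw [this]
    linarith

lemma topSum_eq_range {M : ℕ} (Q : Fin M → ℝ) (hpos : ∀ i, 0 ≤ Q i)
    (hmono : ∀ i j : Fin M, i ≤ j → Q j ≤ Q i) {l : ℕ} (hl : l ≤ M) :
    topSum Q l = ∑ j ∈ Finset.range l, (if h : j < M then Q ⟨j, h⟩ else 0) := by
  have hallm : ∀ m ∈ Finset.range l, m < M := fun m hm =>
    lt_of_lt_of_le (Finset.mem_range.mp hm) hl
  have hsum : ∑ x ∈ (Finset.range l).attachFin hallm, Q x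
      = ∑ j ∈ Finset.range l, (if h : j < M then Q ⟨j, h⟩ else 0) := by
    refine Finset.sum_bij' (fun (x : Fin M) _ => (x : ℕ))
      (fun j hj => (⟨j, hallm j hj⟩ : Fin M)) ?_ ?_ ?_ ?_ ?_
    · intro a ha; rw [Finset.mem_attachFin] at ha; exact ha
    · intro j hj; rw [Finset.mem_attachFin]; exact hj
    · intro a _; exact Fin.eta a a.isLt
    · intro j _; rfl
    · intro a ha
      rw [Finset.mem_attachFin] at ha
      rw [dif_pos (hallm _ ha)]
  refine le_antisymm ?_ ?_
  · obtain ⟨S, hSc, hSe⟩ := topSum_mem Q l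
    rw [hSe]
    refine (sum_le_range_of_antitone Q hmono S.card S rfl).trans ?_
    refine Finset.sum_le_sum_of_subset_of_nonneg (Finset.range_subset_range.mpr hSc) ?_
    intro j _ _
    split
    · exact hpos _
    · exact le_refl 0
  · rw [← hsum]
    exact sum_le_topSum Q _ (by rw [Finset.card_attachFin, Finset.card_range])

lemma sum_univ_eq_topSum {M : ℕ} (Q : Fin M → ℝ) (hpos : ∀ i, 0 ≤ Q i) :
    ∑ i, Q i = topSum Q M :=
  (topSum_eq_sum Q hpos (by simp)).symm

section JPMfacts

variable {α : Type*} [Fintype α] (P : α → ℝ) {M : ℕ}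

lemma JPM_le (hM : 1 ≤ M) : JPM P M ≤ M - 1 := by
  unfold JPM
  refine csSup_le ⟨0, Or.inl rfl⟩ fun j hj => ?_
  rcases hj with hj | hj
  · simp only [Set.mem_singleton_iff] at hj; omega
  · exact hj.2.1

lemma JPM_lt (hM : 1 ≤ M) : JPM P M < M := by
  have := JPM_le P hM; omega

lemma JPM_bddAbove :
    BddAbove ({0} ∪ {j : ℕ | 1 ≤ j ∧ j ≤ M - 1 ∧
      ((∑ x, P x) - topSum P j) / ((M : ℝ) - (j : ℝ)) < sortedVal P j}) := by
  refine ⟨M - 1, ?_⟩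
  intro j hj
  rcases hj with hj | hj
  · simp only [Set.mem_singleton_iff] at hj; omega
  · exact hj.2.1

lemma JPM_mem :
    JPM P M ∈ ({0} : Set ℕ) ∪ {j : ℕ | 1 ≤ j ∧ j ≤ M - 1 ∧
      ((∑ x, P x) - topSum P j) / ((M : ℝ) - (j : ℝ)) < sortedVal P j} :=
  Nat.sSup_mem ⟨0, Or.inl rfl⟩ (JPM_bddAbove P)

/-- Maximality of `JPM`: beyond it, `(M-j) * P↓(j) ≤ tail j`. -/
lemma JPM_max (hM : 1 ≤ M) {j : ℕ} (h1 : JPM P M < j) (h2 : j ≤ M - 1) :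
    ((M : ℝ) - j) * sortedVal P j ≤ (∑ x, P x) - topSum P j := by
  have hj1 : 1 ≤ j := by have := Nat.zero_le (JPM P M); omega
  have hnotmem : ¬ (((∑ x, P x) - topSum P j) / ((M : ℝ) - (j : ℝ)) < sortedVal P j) := by
    intro hcon
    have : j ≤ JPM P M := le_csSup (JPM_bddAbove P) (Or.inr ⟨hj1, h2, hcon⟩)
    omega
  push_neg at hnotmem
  have hMj : (0 : ℝ) < (M : ℝ) - j := by
    have : j < M := by omega
    have : (j : ℝ) < M := by exact_mod_cast this
    linarith
  calc ((M : ℝ) - j) * sortedVal P j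
      ≤ ((M : ℝ) - j) * (((∑ x, P x) - topSum P j) / ((M : ℝ) - j)) :=
        mul_le_mul_of_nonneg_left hnotmem hMj.le
    _ = (∑ x, P x) - topSum P j := by field_simp

end JPMfacts

end Helpers2

section Helpers3

set_option linter.unusedSectionVars false

variable {α : Type*} [Fintype α]

/-- Tail constant `c` of `𝒞_M(P)`. -/
noncomputable def cMconst (P : α → ℝ) (M : ℕ) : ℝ :=
  ((∑ x, P x) - topSum P (JPM P M)) / ((M : ℝ) - (JPM P M : ℝ))

lemma CM_apply (P : α → ℝ) (M : ℕ) (j : Fin M) :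
    CM P M j = if (j : ℕ) + 1 ≤ JPM P M then sortedVal P ((j : ℕ) + 1)
      else cMconst P M := rfl

lemma JPM_cast_lt (P : α → ℝ) {M : ℕ} (hM : 1 ≤ M) :
    (JPM P M : ℝ) < (M : ℝ) := by exact_mod_cast JPM_lt P hM

lemma cMconst_mul (P : α → ℝ) {M : ℕ} (hM : 1 ≤ M) :
    ((M : ℝ) - (JPM P M : ℝ)) * cMconst P M
      = (∑ x, P x) - topSum P (JPM P M) := by
  have hMJ : ((M : ℝ) - (JPM P M : ℝ)) ≠ 0 := by
    have := JPM_cast_lt P hM; linarith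
  rw [cMconst, mul_div_cancel₀ _ hMJ]

lemma cMconst_nonneg (P : α → ℝ) {M : ℕ} (hP : ∀ x, 0 ≤ P x) (hM : 1 ≤ M) :
    0 ≤ cMconst P M := by
  apply div_nonneg
  · have := topSum_le_sum P hP (JPM P M); linarith
  · linarith [JPM_cast_lt P (M := M) hM]

lemma cMconst_lt (P : α → ℝ) {M : ℕ} (hJ : 1 ≤ JPM P M) :
    cMconst P M < sortedVal P (JPM P M) := by
  have hmem := JPM_mem P (M := M)
  rcases hmem with hmem | hmem
  · simp only [Set.mem_singleton_iff] at hmem; omega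
  · exact hmem.2.2

lemma CM_nonneg (P : α → ℝ) {M : ℕ} (hP : ∀ x, 0 ≤ P x) (hM : 1 ≤ M) :
    ∀ i : Fin M, 0 ≤ CM P M i := by
  intro i
  rw [CM_apply]
  split
  · exact sortedVal_nonneg P _
  · exact cMconst_nonneg P hP hM

lemma CM_antitone (P : α → ℝ) {M : ℕ} (hM : 1 ≤ M) :
    ∀ i j : Fin M, i ≤ j → CM P M j ≤ CM P M i := by
  intro i j hij
  rw [CM_apply, CM_apply]
  have hij' : (i : ℕ) ≤ (j : ℕ) := hij
  by_cases hj : (j : ℕ) + 1 ≤ JPM P M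
  · have hi : (i : ℕ) + 1 ≤ JPM P M := by omega
    rw [if_pos hj, if_pos hi]
    exact sortedVal_antitone P (by omega) (by omega)
  · rw [if_neg hj]
    by_cases hi : (i : ℕ) + 1 ≤ JPM P M
    · rw [if_pos hi]
      have h1 : cMconst P M < sortedVal P (JPM P M) := cMconst_lt P (by omega)
      have h2 : sortedVal P (JPM P M) ≤ sortedVal P ((i : ℕ) + 1) :=
        sortedVal_antitone P (by omega) hi
      linarith
    · rw [if_neg hi]

lemma CM_range_sum_lo (P : α → ℝ) {M : ℕ} (hM : 1 ≤ M) {m : ℕ} (hm : m ≤ JPM P M) :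
    ∑ j ∈ Finset.range m, (if h : j < M then CM P M ⟨j, h⟩ else 0) = topSum P m := by
  have hmM : m ≤ M := le_trans hm (JPM_lt P hM).le
  rw [← sum_sortedVal P m]
  apply Finset.sum_congr rfl
  intro j hj
  have hjm : j < m := Finset.mem_range.mp hj
  have hjM : j < M := lt_of_lt_of_le hjm hmM
  rw [dif_pos hjM, CM_apply]
  have : ((⟨j, hjM⟩ : Fin M) : ℕ) = j := rfl
  rw [this, if_pos (by omega : j + 1 ≤ JPM P M)]

lemma CM_range_sum_mid (P : α → ℝ) {M : ℕ} (hM : 1 ≤ M) {m : ℕ}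
    (hm : JPM P M ≤ m) (hmM : m ≤ M) :
    ∑ j ∈ Finset.range m, (if h : j < M then CM P M ⟨j, h⟩ else 0)
      = topSum P (JPM P M) + ((m : ℝ) - (JPM P M : ℝ)) * cMconst P M := by
  rw [Finset.range_eq_Ico, ← Finset.sum_Ico_consecutive _ (Nat.zero_le (JPM P M)) hm]
  have h1 : ∑ j ∈ Finset.Ico 0 (JPM P M), (if h : j < M then CM P M ⟨j, h⟩ else 0)
      = topSum P (JPM P M) := by
    rw [← Finset.range_eq_Ico]
    exact CM_range_sum_lo P hM (le_refl _)
  have h2 : ∑ j ∈ Finset.Ico (JPM P M) m, (if h : j < M then CM P M ⟨j, h⟩ else 0)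
      = ((m - JPM P M : ℕ) : ℝ) * cMconst P M := by
    rw [Finset.sum_congr rfl (g := fun _ => cMconst P M) ?_, Finset.sum_const,
      Nat.card_Ico, nsmul_eq_mul]
    intro j hj
    rw [Finset.mem_Ico] at hj
    have hjM : j < M := lt_of_lt_of_le hj.2 hmM
    rw [dif_pos hjM, CM_apply]
    have : ((⟨j, hjM⟩ : Fin M) : ℕ) = j := rfl
    rw [this, if_neg (by omega)]
  rw [h1, h2, Nat.cast_sub hm]

lemma topSum_CM_lo (P : α → ℝ) (hP : ∀ x, 0 ≤ P x) {M : ℕ} (hM : 1 ≤ M) {l : ℕ}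
    (hl : l ≤ JPM P M) : topSum (CM P M) l = topSum P l := by
  rw [topSum_eq_range (CM P M) (CM_nonneg P hP hM) (CM_antitone P hM)
    (le_trans hl (JPM_lt P hM).le), CM_range_sum_lo P hM hl]

lemma topSum_CM_mid (P : α → ℝ) (hP : ∀ x, 0 ≤ P x) {M : ℕ} (hM : 1 ≤ M) {l : ℕ}
    (h1 : JPM P M ≤ l) (h2 : l ≤ M) :
    topSum (CM P M) l
      = topSum P (JPM P M) + ((l : ℝ) - (JPM P M : ℝ)) * cMconst P M := by
  rw [topSum_eq_range (CM P M) (CM_nonneg P hP hM) (CM_antitone P hM) h2,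
    CM_range_sum_mid P hM h1 h2]

lemma sum_CM (P : α → ℝ) (hP : ∀ x, 0 ≤ P x) {M : ℕ} (hM : 1 ≤ M) :
    ∑ i, CM P M i = ∑ x, P x := by
  rw [sum_univ_eq_topSum _ (CM_nonneg P hP hM),
    topSum_CM_mid P hP hM (JPM_lt P hM).le (le_refl M)]
  have := cMconst_mul P (M := M) hM
  linarith

lemma topSum_CM_hi (P : α → ℝ) (hP : ∀ x, 0 ≤ P x) {M : ℕ} (hM : 1 ≤ M) {l : ℕ}
    (h : M ≤ l) : topSum (CM P M) l = ∑ x, P x := by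
  rw [topSum_eq_sum (CM P M) (CM_nonneg P hP hM) (by simpa using h),
    sum_CM P hP hM]

lemma CM_isProbDist (P : α → ℝ) (hP : IsProbDist P) {M : ℕ} (hM : 1 ≤ M) :
    IsProbDist (CM P M) :=
  ⟨CM_nonneg P hP.1 hM, by rw [sum_CM P hP.1 hM, hP.2]⟩

/-- Key estimate A: the tail decreases at most proportionally beyond `J`. -/
lemma placeA (P : α → ℝ) (hP : ∀ x, 0 ≤ P x) {M : ℕ} (hM : 1 ≤ M) :
    ∀ l, JPM P M ≤ l → l ≤ M →
      ((M : ℝ) - l) * ((∑ x, P x) - topSum P (JPM P M))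
        ≤ ((M : ℝ) - (JPM P M : ℝ)) * ((∑ x, P x) - topSum P l) := by
  refine Nat.le_induction ?_ ?_
  · intro _; exact le_refl _
  · intro l hJl ih hlM
    have ihh := ih (by omega)
    rcases eq_or_lt_of_le hlM with heq | hlt
    · have hcast : ((l : ℝ) + 1) = (M : ℝ) := by exact_mod_cast congrArg Nat.cast heq
      push_cast
      rw [hcast, sub_self, zero_mul]
      apply mul_nonneg
      · linarith [JPM_cast_lt P (M := M) hM]
      · have := topSum_le_sum P hP (l + 1); linarith
    · have hl1 : l + 1 ≤ M - 1 := by omega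
      have hkey1 := JPM_max P hM (j := l + 1) (by omega) hl1
      have hkey2 := topSum_diff_ge P (a := JPM P M) (m := l + 1) (by omega)
      have hTsucc : topSum P (l + 1) = topSum P l + sortedVal P (l + 1) := by
        have := sortedVal_succ P l; linarith
      set J : ℕ := JPM P M with hJ
      set S : ℝ := ∑ x, P x with hS
      set v : ℝ := sortedVal P (l + 1) with hv
      have idv : ((l : ℝ) + 1 - J) * v + ((M : ℝ) - (l + 1)) * v = ((M : ℝ) - J) * v := by
        ring
      have hvle : ((M : ℝ) - J) * v ≤ S - topSum P J := by
        push_cast at hkey1 hkey2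
        linarith
      have e1 : ((M : ℝ) - J) * (S - topSum P (l + 1))
          = ((M : ℝ) - J) * (S - topSum P l) - ((M : ℝ) - J) * v := by
        rw [hTsucc]; ring
      have e2 : ((M : ℝ) - ((l : ℝ) + 1)) * (S - topSum P J)
          = ((M : ℝ) - l) * (S - topSum P J) - (S - topSum P J) := by ring
      push_cast
      push_cast at ihh
      linarith

/-- Key estimate B: concavity interpolation for `topSum`. -/
lemma placeB {γ : Type*} [Fintype γ] (P' : γ → ℝ) {a l b : ℕ} (ha : a ≤ l) (hl : l ≤ b) :
    ((b : ℝ) - l) * topSum P' a + ((l : ℝ) - a) * topSum P' b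
      ≤ ((b : ℝ) - a) * topSum P' l := by
  rcases eq_or_lt_of_le ha with rfl | hal
  · rw [sub_self, zero_mul, add_zero]
  · have h2 := topSum_diff_ge P' (a := a) (m := l) ha
    have h3 := topSum_diff_le P' (m := l) (b := b) hl
    have h4 : sortedVal P' (l + 1) ≤ sortedVal P' l := by
      obtain ⟨k, rfl⟩ := Nat.exists_eq_add_of_le (by omega : 1 ≤ l)
      have e1 : 1 + k + 1 = k + 2 := by omega
      have e2 : 1 + k = k + 1 := by omega
      rw [e1, e2]
      exact sortedVal_step P' k
    have hba : (0 : ℝ) ≤ (b : ℝ) - l := by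
      have : (l : ℝ) ≤ b := by exact_mod_cast hl
      linarith
    have hla : (0 : ℝ) ≤ (l : ℝ) - a := by
      have : (a : ℝ) ≤ l := by exact_mod_cast ha
      linarith
    have m2 := mul_le_mul_of_nonneg_left h2 hba
    have m3 := mul_le_mul_of_nonneg_left h3 hla
    have m4 := mul_le_mul_of_nonneg_left h4 (mul_nonneg hla hba)
    nlinarith [m2, m3, m4]

lemma majorizedBy_CM (P : α → ℝ) (hP : IsProbDist P) {M : ℕ} (hM : 1 ≤ M) :
    MajorizedBy P (CM P M) := by
  intro l
  rcases le_or_gt l (JPM P M) with hl | hl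
  · rw [topSum_CM_lo P hP.1 hM hl]
  · rcases le_or_gt l M with hlM | hlM
    · rw [topSum_CM_mid P hP.1 hM hl.le hlM]
      have hA := placeA P hP.1 hM l hl.le hlM
      have hMJ : (0 : ℝ) < (M : ℝ) - (JPM P M : ℝ) := by
        linarith [JPM_cast_lt P (M := M) hM]
      set J : ℕ := JPM P M with hJ
      set S : ℝ := ∑ x, P x with hS
      refine le_of_mul_le_mul_left ?_ hMJ
      have expand : ((M : ℝ) - J) * (topSum P J + ((l : ℝ) - J) * cMconst P M)
          = ((M : ℝ) - J) * topSum P J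
            + ((l : ℝ) - J) * (((M : ℝ) - J) * cMconst P M) := by ring
      rw [expand, cMconst_mul P hM]
      have e1 : ((M : ℝ) - J) * (S - topSum P l) + ((M : ℝ) - J) * topSum P l
          = ((M : ℝ) - J) * S := by ring
      have e2 : ((M : ℝ) - l) * (S - topSum P J)
          = ((M : ℝ) - J) * (S - topSum P J) - ((l : ℝ) - J) * (S - topSum P J) := by ring
      have e3 : ((M : ℝ) - J) * S
          = ((M : ℝ) - J) * topSum P J + ((M : ℝ) - J) * (S - topSum P J) := by ring
      linarith
    · rw [topSum_CM_hi P hP.1 hM hlM.le]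
      exact topSum_le_sum P hP.1 l

lemma CM_majorizedBy (P : α → ℝ) (hP : IsProbDist P) {M : ℕ} (hM : 1 ≤ M)
    (P' : Fin M → ℝ) (hP' : IsProbDist P') (h : MajorizedBy P P') :
    MajorizedBy (CM P M) P' := by
  intro l
  have hTM : topSum P' M = 1 := by
    rw [topSum_eq_sum P' hP'.1 (by simp)]; exact hP'.2
  rcases le_or_gt l (JPM P M) with hl | hl
  · rw [topSum_CM_lo P hP.1 hM hl]; exact h l
  · rcases le_or_gt l M with hlM | hlM
    · rw [topSum_CM_mid P hP.1 hM hl.le hlM]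
      have hB := placeB P' (a := JPM P M) (l := l) (b := M) hl.le hlM
      rw [hTM] at hB
      have hTJ : topSum P (JPM P M) ≤ topSum P' (JPM P M) := h _
      have hMJ : (0 : ℝ) < (M : ℝ) - (JPM P M : ℝ) := by
        linarith [JPM_cast_lt P (M := M) hM]
      set J : ℕ := JPM P M with hJ
      refine le_of_mul_le_mul_left ?_ hMJ
      have expand : ((M : ℝ) - J) * (topSum P J + ((l : ℝ) - J) * cMconst P M)
          = ((M : ℝ) - J) * topSum P J
            + ((l : ℝ) - J) * (((M : ℝ) - J) * cMconst P M) := by ring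
      rw [expand, cMconst_mul P hM, hP.2]
      have hMl : (0 : ℝ) ≤ (M : ℝ) - l := by
        have : (l : ℝ) ≤ M := by exact_mod_cast hlM
        linarith
      have m1 : ((M : ℝ) - l) * topSum P J ≤ ((M : ℝ) - l) * topSum P' J :=
        mul_le_mul_of_nonneg_left hTJ hMl
      have e1 : ((M : ℝ) - J) * topSum P J + ((l : ℝ) - J) * (1 - topSum P J)
          = ((M : ℝ) - l) * topSum P J + ((l : ℝ) - J) * 1 := by ring
      linarith
    · rw [topSum_CM_hi P hP.1 hM hlM.le, hP.2]
      calc (1 : ℝ) = topSum P' M := hTM.symm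
        _ ≤ topSum P' l := topSum_mono P' hlM.le

end Helpers3


/-- Lemma (opt trans): the maximal fidelity of majorization conversion from `P`
to `Q` via a storage of `N` bits equals the maximal fidelity of unrestricted
majorization conversion from `𝒞_{2^N}(P)` to `Q`. -/
theorem FMstore_eq_FM_CM {α β : Type*} [Fintype α] [Fintype β]
    (P : α → ℝ) (Q : β → ℝ) (hP : IsProbDist P) (hQ : IsProbDist Q) (N : ℕ) :
    FMstore P Q (2 ^ N) = FM (CM P (2 ^ N)) Q := by
  have hM : 1 ≤ 2 ^ N := Nat.one_le_pow N 2 (by norm_num)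
  have hset : {r : ℝ | ∃ P' : Fin (2 ^ N) → ℝ, ∃ P'' : β → ℝ,
        IsProbDist P' ∧ IsProbDist P'' ∧ MajorizedBy P P' ∧ MajorizedBy P' P'' ∧
        r = fid P'' Q}
      = {r : ℝ | ∃ P'' : β → ℝ, IsProbDist P'' ∧ MajorizedBy (CM P (2 ^ N)) P'' ∧
        r = fid P'' Q} := by
    ext r
    simp only [Set.mem_setOf_eq]
    constructor
    · rintro ⟨P', P'', h1, h2, h3, h4, rfl⟩
      exact ⟨P'', h2, fun l => le_trans (CM_majorizedBy P hP hM P' h1 h3 l) (h4 l), rfl⟩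
    · rintro ⟨P'', h2, h3, rfl⟩
      exact ⟨CM P (2 ^ N), P'', CM_isProbDist P hP hM, h2, majorizedBy_CM P hP hM, h3, rfl⟩
  rw [FMstore, FM, hset]
end

section
/- Let s₁, t₁ > 0 and s₂, t₂, s'₂, t'₂ ∈ ℝ. Then there exists a sequence {a_n} ⊂ (0,1] satisfying s₁(1 − a_n)√n = s₂√(a_n) − s'₂ + o(1) and t₁(1 − a_n)√n = t₂√(a_n) − t'₂ + o(1) as n → ∞ (i.e., the second-order rate pair (s₂, t₂) at first-order rates (s₁, t₁) simulates (s'₂, t'₂)) if and only if s₂ ≥ s'₂ and t'₂ = t₂ + (t₁/s₁)(s'₂ − s₂). -/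
open Filter Topology

private lemma sqrt_nat_atTop : Tendsto (fun n : ℕ => Real.sqrt n) atTop atTop := by
  apply tendsto_atTop.2
  intro b
  filter_upwards [eventually_ge_atTop (Nat.ceil ((max b 0)^2))] with n hn
  have h1 : ((max b 0)^2 : ℝ) ≤ n := le_trans (Nat.le_ceil _) (by exact_mod_cast hn)
  calc b ≤ max b 0 := le_max_left _ _
  _ = Real.sqrt ((max b 0)^2) := (Real.sqrt_sq (le_max_right _ _)).symm
  _ ≤ Real.sqrt n := Real.sqrt_le_sqrt h1

/-- Lemma (simulate, second order): given first-order rates `s₁, t₁ > 0`, the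
second-order rate pair `(s₂, t₂)` simulates `(s'₂, t'₂)`, i.e. there exists a
sequence `{a_n} ⊂ (0,1]` with `s₁(1 − a_n)√n = s₂√(a_n) − s'₂ + o(1)` and
`t₁(1 − a_n)√n = t₂√(a_n) − t'₂ + o(1)`, if and only if `s₂ ≥ s'₂` and
`t'₂ = t₂ + (t₁/s₁)(s'₂ − s₂)`. -/
theorem second_order_simulates_iff (s₁ t₁ : ℝ) (hs₁ : 0 < s₁) (ht₁ : 0 < t₁)
    (s₂ t₂ s₂' t₂' : ℝ) :
    (∃ a : ℕ → ℝ, (∀ n, a n ∈ Set.Ioc (0 : ℝ) 1) ∧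
      Tendsto (fun n : ℕ =>
        s₁ * (1 - a n) * Real.sqrt n - (s₂ * Real.sqrt (a n) - s₂')) atTop (𝓝 0) ∧
      Tendsto (fun n : ℕ =>
        t₁ * (1 - a n) * Real.sqrt n - (t₂ * Real.sqrt (a n) - t₂')) atTop (𝓝 0)) ↔
    (s₂' ≤ s₂ ∧ t₂' = t₂ + (t₁ / s₁) * (s₂' - s₂)) := by
  constructor
  · rintro ⟨a, ha, h1, h2⟩
    have hapos : ∀ n, 0 < a n := fun n => (ha n).1
    have hale : ∀ n, a n ≤ 1 := fun n => (ha n).2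
    have hb : ∀ n, 0 ≤ (1 - a n) * Real.sqrt n := fun n =>
      mul_nonneg (by linarith [hale n]) (Real.sqrt_nonneg _)
    have hsq : ∀ n, Real.sqrt (a n) ≤ 1 := fun n => by
      rw [show (1:ℝ) = Real.sqrt 1 by simp]
      exact Real.sqrt_le_sqrt (hale n)
    have hC : ∀ᶠ n : ℕ in atTop,
        (1 - a n) * Real.sqrt n ≤ (1 + |s₂| + |s₂'|) / s₁ := by
      have := (Metric.tendsto_nhds.mp h1) 1 one_pos
      filter_upwards [this] with n hn
      rw [Real.dist_eq, sub_zero] at hn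
      have h1' : s₁ * (1 - a n) * Real.sqrt n - (s₂ * Real.sqrt (a n) - s₂') ≤ 1 :=
        le_of_lt (lt_of_abs_lt hn)
      have hs2 : s₂ * Real.sqrt (a n) ≤ |s₂| := by
        calc s₂ * Real.sqrt (a n) ≤ |s₂ * Real.sqrt (a n)| := le_abs_self _
        _ = |s₂| * |Real.sqrt (a n)| := abs_mul _ _
        _ ≤ |s₂| * 1 := by
            apply mul_le_mul_of_nonneg_left _ (abs_nonneg _)
            rw [abs_of_nonneg (Real.sqrt_nonneg _)]; exact hsq n
        _ = |s₂| := mul_one _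
      have hkey : s₁ * ((1 - a n) * Real.sqrt n) ≤ 1 + |s₂| + |s₂'| := by
        have := neg_abs_le s₂'
        nlinarith [abs_nonneg s₂']
      rw [le_div_iff₀ hs₁]
      linarith [hkey]
    have hinv : Tendsto (fun n : ℕ => (1 + |s₂| + |s₂'|) / s₁ / Real.sqrt n)
        atTop (𝓝 0) :=
      Tendsto.div_atTop tendsto_const_nhds sqrt_nat_atTop
    have ha0 : Tendsto (fun n : ℕ => 1 - a n) atTop (𝓝 0) := by
      apply tendsto_of_tendsto_of_tendsto_of_le_of_le' tendsto_const_nhds hinv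
      · filter_upwards with n using by linarith [hale n]
      · filter_upwards [hC, eventually_ge_atTop 1] with n hn hn1
        have hsn : (0:ℝ) < Real.sqrt n := Real.sqrt_pos.mpr (by exact_mod_cast hn1)
        rw [le_div_iff₀ hsn]
        exact hn
    have ha1 : Tendsto a atTop (𝓝 1) := by
      have h := ha0.const_sub (1:ℝ)
      simp only [sub_sub_cancel, sub_zero] at h
      exact h
    have hsqa : Tendsto (fun n => Real.sqrt (a n)) atTop (𝓝 1) := by
      have := (Real.continuous_sqrt.tendsto 1).comp ha1
      simpa [Function.comp_def] using this
    have hg : Tendsto (fun n => s₂ * Real.sqrt (a n) - s₂') atTop (𝓝 (s₂ - s₂')) := by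
      have := (hsqa.const_mul s₂).sub (tendsto_const_nhds (x := s₂'))
      simpa using this
    have hS : Tendsto (fun n : ℕ => s₁ * ((1 - a n) * Real.sqrt n)) atTop
        (𝓝 (s₂ - s₂')) := by
      have := h1.add hg
      simp only [zero_add] at this
      refine this.congr fun n => by ring
    have hT : Tendsto (fun n : ℕ => t₁ * ((1 - a n) * Real.sqrt n)) atTop
        (𝓝 (t₂ - t₂')) := by
      have hg' : Tendsto (fun n => t₂ * Real.sqrt (a n) - t₂') atTop (𝓝 (t₂ - t₂')) := by
        have := (hsqa.const_mul t₂).sub (tendsto_const_nhds (x := t₂'))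
        simpa using this
      have := h2.add hg'
      simp only [zero_add] at this
      refine this.congr fun n => by ring
    have hle : s₂' ≤ s₂ := by
      have : (0:ℝ) ≤ s₂ - s₂' :=
        ge_of_tendsto' hS fun n => mul_nonneg hs₁.le (hb n)
      linarith
    have hlim : Tendsto (fun n : ℕ => (1 - a n) * Real.sqrt n) atTop
        (𝓝 ((s₂ - s₂') / s₁)) := by
      have h := hS.const_mul s₁⁻¹
      have heq1 : s₁⁻¹ * (s₂ - s₂') = (s₂ - s₂') / s₁ := by
        field_simp
      rw [heq1] at h
      refine h.congr fun n => ?_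
      field_simp
    have hT' : Tendsto (fun n : ℕ => t₁ * ((1 - a n) * Real.sqrt n)) atTop
        (𝓝 (t₁ * ((s₂ - s₂') / s₁))) := hlim.const_mul t₁
    have heq : t₂ - t₂' = t₁ * ((s₂ - s₂') / s₁) := tendsto_nhds_unique hT hT'
    refine ⟨hle, ?_⟩
    field_simp at heq ⊢
    linarith
  · rintro ⟨hle, heq⟩
    set c := (s₂ - s₂') / s₁ with hc
    have hc0 : 0 ≤ c := div_nonneg (by linarith) hs₁.le
    set A : ℕ → ℝ := fun n => max (1 - c / Real.sqrt n) (1/2) with hA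
    have hmem : ∀ n, A n ∈ Set.Ioc (0:ℝ) 1 := by
      intro n
      constructor
      · exact lt_of_lt_of_le (by norm_num) (le_max_right _ _)
      · apply max_le
        · have : 0 ≤ c / Real.sqrt n := div_nonneg hc0 (Real.sqrt_nonneg _)
          linarith
        · norm_num
    have hev : ∀ᶠ n : ℕ in atTop, (1 - A n) * Real.sqrt n = c := by
      filter_upwards [sqrt_nat_atTop.eventually_ge_atTop (2*c + 1)] with n hn
      have hsn : (0:ℝ) < Real.sqrt n := by linarith
      have hq : c / Real.sqrt n ≤ 1/2 := by
        rw [div_le_iff₀ hsn]; nlinarith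
      have hmax : A n = 1 - c / Real.sqrt n := max_eq_left (by linarith)
      rw [hmax]
      field_simp; ring
    have ha1 : Tendsto A atTop (𝓝 1) := by
      have hd : Tendsto (fun n : ℕ => c / Real.sqrt n) atTop (𝓝 0) :=
        Tendsto.div_atTop tendsto_const_nhds sqrt_nat_atTop
      have hbase : Tendsto (fun n : ℕ => 1 - c / Real.sqrt n) atTop (𝓝 1) := by
        have := (tendsto_const_nhds (x := (1:ℝ))).sub hd
        simpa using this
      have h := hbase.max (tendsto_const_nhds (x := (1/2:ℝ)))
      rwa [show max (1:ℝ) (1/2) = 1 by norm_num] at h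
    have hsqa : Tendsto (fun n => Real.sqrt (A n)) atTop (𝓝 1) := by
      have := (Real.continuous_sqrt.tendsto 1).comp ha1
      simpa [Function.comp_def] using this
    refine ⟨A, hmem, ?_, ?_⟩
    · have hgoal : Tendsto (fun n : ℕ =>
          s₁ * c - (s₂ * Real.sqrt (A n) - s₂')) atTop (𝓝 0) := by
        have h := (tendsto_const_nhds (x := s₁ * c)).sub
          ((hsqa.const_mul s₂).sub (tendsto_const_nhds (x := s₂')))
        have hval : s₁ * c - (s₂ * 1 - s₂') = 0 := by
          rw [hc]; field_simp; ring
        rwa [hval] at h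
      refine hgoal.congr' ?_
      filter_upwards [hev] with n h2
      rw [show s₁ * (1 - A n) * Real.sqrt n = s₁ * ((1 - A n) * Real.sqrt n) by ring,
        h2]
    · have hgoal : Tendsto (fun n : ℕ =>
          t₁ * c - (t₂ * Real.sqrt (A n) - t₂')) atTop (𝓝 0) := by
        have h := (tendsto_const_nhds (x := t₁ * c)).sub
          ((hsqa.const_mul t₂).sub (tendsto_const_nhds (x := t₂')))
        have hval : t₁ * c - (t₂ * 1 - t₂') = 0 := by
          rw [hc, heq]; field_simp; ring
        rwa [hval] at h
      refine hgoal.congr' ?_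
      filter_upwards [hev] with n h2
      rw [show t₁ * (1 - A n) * Real.sqrt n = t₁ * ((1 - A n) * Real.sqrt n) by ring,
        h2]
end
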